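/- Let T ≥ s+1 and suppose ε_t = 0, ξ_t = 0, ζ_t = 0 and ω_t = 0 for all t > T. Then for every t > T, y_t = μ_1 + Σ_{τ=2}^{T} ξ_τ + (t−1)·ν_1 + Σ_{τ=2}^{T} (t−τ)·ζ_τ + γ_{m_t} + Σ_{j=0}^{⌊(t−1)/s⌋−1} (ω_{t−js} − ω_{t−1−js}), where m_t = t − s·⌊(t−1)/s⌋ (and the last sum only has nonzero terms with index at most T). -/
import Mathlib

open Finset

lemma nu_formula (ν ζ : ℕ → ℝ)
    (hν : ∀ t, 1 ≤ t → ν (t + 1) = ν t + ζ (t + 1)) :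
    ∀ t, 1 ≤ t → ν t = ν 1 + ∑ τ ∈ Finset.Icc 2 t, ζ τ := by
  intro t ht
  induction t with
  | zero => omega
  | succ n ih =>
    rcases Nat.lt_or_ge n 1 with h | h
    · have : n = 0 := by omega
      subst this; simp
    · rw [hν n h, ih h, Finset.sum_Icc_succ_top (show 2 ≤ n + 1 by omega)]
      ring

lemma mu_formula (μ ν ξ ζ : ℕ → ℝ)
    (hμ : ∀ t, 1 ≤ t → μ (t + 1) = μ t + ν t + ξ (t + 1))
    (hν : ∀ t, 1 ≤ t → ν (t + 1) = ν t + ζ (t + 1)) :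
    ∀ t, 1 ≤ t → μ t = μ 1 + (∑ τ ∈ Finset.Icc 2 t, ξ τ) + ((t : ℝ) - 1) * ν 1
      + ∑ τ ∈ Finset.Icc 2 t, ((t : ℝ) - (τ : ℝ)) * ζ τ := by
  intro t ht
  induction t with
  | zero => omega
  | succ n ih =>
    rcases Nat.lt_or_ge n 1 with h | h
    · have : n = 0 := by omega
      subst this; simp
    · rw [hμ n h, ih h, nu_formula ν ζ hν n h,
        Finset.sum_Icc_succ_top (show 2 ≤ n + 1 by omega),
        Finset.sum_Icc_succ_top (show 2 ≤ n + 1 by omega)]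
      push_cast
      have hb : ∑ τ ∈ Finset.Icc 2 n, ((n : ℝ) + 1 - (τ : ℝ)) * ζ τ
          = (∑ τ ∈ Finset.Icc 2 n, ((n : ℝ) - (τ : ℝ)) * ζ τ)
            + ∑ τ ∈ Finset.Icc 2 n, ζ τ := by
        rw [← Finset.sum_add_distrib]
        apply Finset.sum_congr rfl
        intro τ _
        ring
      rw [hb]
      ring

lemma gamma_formula (s : ℕ) (hs : 2 ≤ s) (γ ω : ℕ → ℝ)
    (hω : ∀ t, s ≤ t → ω t = ∑ j ∈ Finset.range s, γ (t - j)) :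
    ∀ t, 1 ≤ t → γ t = γ (t - s * ((t - 1) / s))
      + ∑ j ∈ Finset.range ((t - 1) / s), (ω (t - j * s) - ω (t - 1 - j * s)) := by
  intro t
  induction t using Nat.strong_induction_on with
  | _ t ih =>
    intro ht
    rcases Nat.lt_or_ge t (s + 1) with h | h
    · have hk : (t - 1) / s = 0 := Nat.div_eq_of_lt (by omega)
      simp [hk]
    · -- t ≥ s + 1
      have hs0 : 0 < s := by omega
      have h1 : ω t = (∑ j ∈ Finset.range (s - 1), γ (t - 1 - j)) + γ t := by
        rw [hω t (by omega), show s = (s - 1) + 1 by omega, Finset.sum_range_succ']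
        simp only [Nat.sub_zero]
        congr 1
        apply Finset.sum_congr rfl
        intro j _
        congr 1
        omega
      have h2 : ω (t - 1) = (∑ j ∈ Finset.range (s - 1), γ (t - 1 - j)) + γ (t - s) := by
        rw [hω (t - 1) (by omega), show Finset.range s = Finset.range ((s - 1) + 1) from
          by congr 1; omega, Finset.sum_range_succ]
        congr 2
        omega
      have hstep : γ t = γ (t - s) + (ω t - ω (t - 1)) := by
        rw [h1, h2]; ring
      set k := (t - 1) / s with hkdef
      have hr : (t - 1) % s < s := Nat.mod_lt _ hs0
      have hdm : s * k + (t - 1) % s = t - 1 := Nat.div_add_mod (t - 1) s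
      have hk1 : 1 ≤ k := (Nat.one_le_div_iff hs0).mpr (by omega)
      have hk' : s * k = s * (k - 1) + s := by
        conv_lhs => rw [show k = (k - 1) + 1 by omega]
        rw [Nat.mul_succ]
      have hdiv : (t - s - 1) / s = k - 1 := by
        have h' : t - s - 1 = s * (k - 1) + (t - 1) % s := by omega
        rw [h', Nat.mul_add_div hs0, Nat.div_eq_of_lt hr]
        omega
      have hts1 : 1 ≤ t - s := by omega
      have hrec := ih (t - s) (by omega) hts1
      rw [hdiv] at hrec
      have hidx : t - s - s * (k - 1) = t - s * k := by omega
      rw [hidx] at hrec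
      have hsum : ∑ j ∈ Finset.range k, (ω (t - j * s) - ω (t - 1 - j * s))
          = (ω t - ω (t - 1))
            + ∑ j ∈ Finset.range (k - 1), (ω (t - s - j * s) - ω (t - s - 1 - j * s)) := by
        conv_lhs => rw [show k = (k - 1) + 1 by omega]
        rw [Finset.sum_range_succ']
        simp only [Nat.zero_mul, Nat.sub_zero]
        rw [add_comm]
        congr 1
        apply Finset.sum_congr rfl
        intro j _
        have hjs : (j + 1) * s = j * s + s := by ring
        congr 2 <;> omega
      rw [hsum, hstep, hrec]
      ring

/-- State Space Learning extrapolation formula: in the basic structural model, if all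
disturbances vanish after time `T ≥ s+1`, then for `t > T`,
`y t = μ 1 + ∑_{τ=2}^{T} ξ τ + (t−1)·ν 1 + ∑_{τ=2}^{T} (t−τ)·ζ τ + γ (m t)
      + ∑_{j=0}^{⌊(t−1)/s⌋−1} (ω (t−js) − ω (t−1−js))`,
where `m t = t − s·⌊(t−1)/s⌋`. -/
theorem ssl_extrapolation
    (s : ℕ) (hs : 2 ≤ s)
    (y μ ν γ ε ξ ζ ω : ℕ → ℝ)
    (hy : ∀ t, 1 ≤ t → y t = μ t + γ t + ε t)
    (hμ : ∀ t, 1 ≤ t → μ (t + 1) = μ t + ν t + ξ (t + 1))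
    (hν : ∀ t, 1 ≤ t → ν (t + 1) = ν t + ζ (t + 1))
    (hω : ∀ t, s ≤ t → ω t = ∑ j ∈ Finset.range s, γ (t - j))
    (T : ℕ) (hT : s + 1 ≤ T)
    (hε0 : ∀ t, T < t → ε t = 0)
    (hξ0 : ∀ t, T < t → ξ t = 0)
    (hζ0 : ∀ t, T < t → ζ t = 0)
    (hω0 : ∀ t, T < t → ω t = 0) :
    ∀ t, T < t →
      y t = μ 1 + (∑ τ ∈ Finset.Icc 2 T, ξ τ) + ((t : ℝ) - 1) * ν 1
        + (∑ τ ∈ Finset.Icc 2 T, ((t : ℝ) - (τ : ℝ)) * ζ τ)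
        + γ (t - s * ((t - 1) / s))
        + (∑ j ∈ Finset.range ((t - 1) / s), (ω (t - j * s) - ω (t - 1 - j * s))) := by
  intro t ht
  have ht1 : 1 ≤ t := by omega
  have h1 : ∑ τ ∈ Finset.Icc 2 t, ξ τ = ∑ τ ∈ Finset.Icc 2 T, ξ τ := by
    symm
    apply Finset.sum_subset
    · intro x hx
      simp only [Finset.mem_Icc] at *
      omega
    · intro x hx hx'
      simp only [Finset.mem_Icc] at hx hx'
      exact hξ0 x (by omega)
  have h2 : ∑ τ ∈ Finset.Icc 2 t, ((t : ℝ) - (τ : ℝ)) * ζ τ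
      = ∑ τ ∈ Finset.Icc 2 T, ((t : ℝ) - (τ : ℝ)) * ζ τ := by
    symm
    apply Finset.sum_subset
    · intro x hx
      simp only [Finset.mem_Icc] at *
      omega
    · intro x hx hx'
      simp only [Finset.mem_Icc] at hx hx'
      rw [hζ0 x (by omega), mul_zero]
  rw [hy t ht1, hε0 t ht, mu_formula μ ν ξ ζ hμ hν t ht1,
    gamma_formula s hs γ ω hω t ht1, h1, h2]
  ring
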